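/- Let d ≥ 1 be an integer and v ≥ 0 a real number. For every coupling μ of χ_d with itself, the positive monotone coupling μ_PM satisfies ∫ c_RLF dμ ≤ ∫ c_RLF dμ_PM. That is, among all probability measures on ℝ × ℝ with both marginals equal to χ_d, the positive monotone coupling maximizes the expected cost c_RLF. -/

import Mathlib

open MeasureTheory ProbabilityTheory Set Filter
open scoped Topology ENNReal

noncomputable section

/-- The standard Gaussian measure on `ℝ^d` (the `d`-fold product of `N(0,1)`),
realized on `EuclideanSpace ℝ (Fin d)` so that the norm is the Euclidean norm. -/
def stdGaussian (d : ℕ) : Measure (EuclideanSpace ℝ (Fin d)) :=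
  (Measure.pi fun _ : Fin d => gaussianReal 0 1).map
    (EuclideanSpace.equiv (Fin d) ℝ).symm

/-- The chi distribution with `d` degrees of freedom: the law of the Euclidean norm of a
standard Gaussian vector in `ℝ^d`. -/
def chi (d : ℕ) : Measure ℝ := (stdGaussian d).map fun x => ‖x‖

/-- The cumulative distribution function of `χ_d`. -/
def chiCDF (d : ℕ) (x : ℝ) : ℝ := (chi d (Set.Iic x)).toReal

/-- The quantile function `F⁻¹(u) = inf {x : F x ≥ u}` of `χ_d`. -/
def chiQuantile (d : ℕ) (u : ℝ) : ℝ := sInf {x : ℝ | u ≤ chiCDF d x}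

/-- The negative monotone coupling of `χ_d` with itself: the pushforward of the uniform
probability measure on `[0,1]` under `u ↦ (F⁻¹(u), F⁻¹(1 - u))`. -/
def muNM (d : ℕ) : Measure (ℝ × ℝ) :=
  ((volume : Measure ℝ).restrict (Set.Icc 0 1)).map
    fun u => (chiQuantile d u, chiQuantile d (1 - u))
/-- The positive monotone coupling of `χ_d` with itself: the pushforward of the uniform
probability measure on `[0,1]` under `u ↦ (F⁻¹(u), F⁻¹(u))`. -/
def muPM (d : ℕ) : Measure (ℝ × ℝ) :=
  ((volume : Measure ℝ).restrict (Set.Icc 0 1)).map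
    fun u => (chiQuantile d u, chiQuantile d u)

/-- The random Laplace feature cost function
`c_RLF(x,y) = Σ_k v^(2k) (x² + y²)^k / (4^k k! Γ(k + d/2))`. -/
def cRLF (d : ℕ) (v : ℝ) (x y : ℝ) : ℝ :=
  ∑' k : ℕ,
    v ^ (2 * k) * (x ^ 2 + y ^ 2) ^ k /
      (4 ^ k * (Nat.factorial k) * Real.Gamma ((k : ℝ) + d / 2))

instance stdGaussian_prob (d : ℕ) : IsProbabilityMeasure (stdGaussian d) :=
  Measure.isProbabilityMeasure_map (EuclideanSpace.equiv (Fin d) ℝ).symm.continuous.measurable.aemeasurable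

instance chi_prob (d : ℕ) : IsProbabilityMeasure (chi d) :=
  Measure.isProbabilityMeasure_map measurable_norm.aemeasurable

lemma chi_Iic_neg (d : ℕ) {x : ℝ} (hx : x < 0) : chi d (Set.Iic x) = 0 := by
  rw [chi, Measure.map_apply measurable_norm measurableSet_Iic]
  convert measure_empty (μ := stdGaussian d)
  ext y
  simp only [mem_preimage, mem_Iic, mem_empty_iff_false, iff_false]
  intro h
  exact absurd (le_trans (norm_nonneg y) h) (not_le.mpr hx)

lemma chiCDF_eq_cdf (d : ℕ) : chiCDF d = ⇑(cdf (chi d)) := by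
  funext x
  rw [chiCDF, cdf_eq_real, measureReal_def]

lemma chiCDF_mono (d : ℕ) : Monotone (chiCDF d) := by
  rw [chiCDF_eq_cdf]; exact monotone_cdf _

lemma chiCDF_nonneg (d : ℕ) (x : ℝ) : 0 ≤ chiCDF d x := ENNReal.toReal_nonneg

lemma chiCDF_le_one (d : ℕ) (x : ℝ) : chiCDF d x ≤ 1 := by
  rw [chiCDF_eq_cdf]; exact cdf_le_one _ _

lemma chiCDF_neg (d : ℕ) {x : ℝ} (hx : x < 0) : chiCDF d x = 0 := by
  rw [chiCDF, chi_Iic_neg d hx, ENNReal.toReal_zero]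

lemma chiCDF_mem_Ici {d : ℕ} {u x : ℝ} (hu : 0 < u) (hx : u ≤ chiCDF d x) : 0 ≤ x := by
  by_contra h
  rw [chiCDF_neg d (not_le.mp h)] at hx
  exact absurd (lt_of_lt_of_le hu hx) (lt_irrefl 0)

lemma bddBelow_quantileSet {d : ℕ} {u : ℝ} (hu : 0 < u) :
    BddBelow {x : ℝ | u ≤ chiCDF d x} :=
  ⟨0, fun _ hy => chiCDF_mem_Ici hu hy⟩

lemma nonempty_quantileSet {d : ℕ} {u : ℝ} (hu : u < 1) :
    {x : ℝ | u ≤ chiCDF d x}.Nonempty := by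
  have h : Tendsto (chiCDF d) atTop (𝓝 1) := by
    rw [chiCDF_eq_cdf]; exact tendsto_cdf_atTop _
  obtain ⟨x, hx⟩ := (h.eventually (eventually_ge_nhds hu)).exists
  exact ⟨x, hx⟩

lemma le_chiCDF_quantile {d : ℕ} {u : ℝ} (hu0 : 0 < u) (hu1 : u < 1) :
    u ≤ chiCDF d (chiQuantile d u) := by
  obtain ⟨s, hanti, htend, hmem⟩ :=
    exists_seq_tendsto_sInf (nonempty_quantileSet (d := d) hu1) (bddBelow_quantileSet hu0)
  have hrc : ContinuousWithinAt (chiCDF d) (Ici (chiQuantile d u)) (chiQuantile d u) := by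
    rw [chiCDF_eq_cdf]; exact (cdf (chi d)).right_continuous _
  have hge : ∀ n, chiQuantile d u ≤ s n := fun n =>
    csInf_le (bddBelow_quantileSet hu0) (hmem n)
  have htend' : Tendsto (fun n => chiCDF d (s n)) atTop (𝓝 (chiCDF d (chiQuantile d u))) := by
    refine hrc.tendsto.comp ?_
    rw [tendsto_nhdsWithin_iff]
    exact ⟨htend, Eventually.of_forall fun n => hge n⟩
  exact ge_of_tendsto htend' (Eventually.of_forall fun n => hmem n)

lemma quantile_le_iff {d : ℕ} {u x : ℝ} (hu0 : 0 < u) (hu1 : u < 1) :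
    chiQuantile d u ≤ x ↔ u ≤ chiCDF d x := by
  constructor
  · intro h
    exact le_trans (le_chiCDF_quantile hu0 hu1) (chiCDF_mono d h)
  · intro h
    exact csInf_le (bddBelow_quantileSet hu0) h

lemma quantile_monotoneOn (d : ℕ) : MonotoneOn (chiQuantile d) (Ioo (0:ℝ) 1) := by
  intro u hu u' hu' huu'
  refine csInf_le_csInf (bddBelow_quantileSet hu.1) (nonempty_quantileSet hu'.2) ?_
  intro x hx
  exact le_trans huu' hx

lemma quantile_aemeasurable (d : ℕ) :
    AEMeasurable (chiQuantile d) ((volume : Measure ℝ).restrict (Icc 0 1)) := by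
  rw [← Measure.restrict_congr_set Ioo_ae_eq_Icc]
  exact aemeasurable_restrict_of_monotoneOn measurableSet_Ioo (quantile_monotoneOn d)

instance unif_prob : IsProbabilityMeasure ((volume : Measure ℝ).restrict (Icc 0 1)) :=
  ⟨by simp [Real.volume_Icc]⟩

lemma map_quantile (d : ℕ) :
    ((volume : Measure ℝ).restrict (Icc 0 1)).map (chiQuantile d) = chi d := by
  have hQ := quantile_aemeasurable d
  have : IsProbabilityMeasure (((volume : Measure ℝ).restrict (Icc 0 1)).map (chiQuantile d)) :=
    Measure.isProbabilityMeasure_map hQ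
  refine Measure.ext_of_Iic _ _ fun x => ?_
  rw [Measure.map_apply_of_aemeasurable hQ measurableSet_Iic,
    Measure.restrict_apply' measurableSet_Icc]
  have hF0 : 0 ≤ chiCDF d x := chiCDF_nonneg d x
  have hF1 : chiCDF d x ≤ 1 := chiCDF_le_one d x
  set T : Set ℝ := chiQuantile d ⁻¹' Iic x ∩ Icc 0 1 with hT
  set A : Set ℝ := Ioo (0:ℝ) 1 ∩ Iic (chiCDF d x) with hA
  have hAT : A ⊆ T := by
    rintro u ⟨hu, hux⟩
    exact ⟨(quantile_le_iff hu.1 hu.2).mpr hux, ⟨hu.1.le, hu.2.le⟩⟩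
  have hTA : T ⊆ A ∪ {0, 1} := by
    rintro u ⟨hux, hu0, hu1⟩
    rcases eq_or_lt_of_le hu0 with h0 | h0
    · exact Or.inr (Or.inl h0.symm)
    rcases eq_or_lt_of_le hu1 with h1 | h1
    · exact Or.inr (Or.inr h1)
    exact Or.inl ⟨⟨h0, h1⟩, (quantile_le_iff h0 h1).mp hux⟩
  have hvolT : volume T = volume A := by
    refine le_antisymm ?_ (measure_mono hAT)
    calc volume T ≤ volume (A ∪ {0, 1}) := measure_mono hTA
      _ ≤ volume A + volume ({0, 1} : Set ℝ) := measure_union_le _ _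
      _ = volume A := by
          rw [show volume ({0, 1} : Set ℝ) = 0 from
            (Set.Finite.insert 0 (Set.finite_singleton 1)).measure_zero _, add_zero]
  rw [hvolT]
  have hvolA : volume A = ENNReal.ofReal (chiCDF d x) := by
    rcases eq_or_lt_of_le hF1 with h1 | h1
    · have : A = Ioo (0:ℝ) 1 := by
        rw [hA]
        refine inter_eq_left.mpr fun u hu => ?_
        exact le_trans hu.2.le (le_of_eq h1.symm)
      rw [this, Real.volume_Ioo, h1]
      norm_num
    · have : A = Ioc (0:ℝ) (chiCDF d x) := by
        ext u
        simp only [hA, mem_inter_iff, mem_Ioo, mem_Iic, mem_Ioc]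
        constructor
        · rintro ⟨⟨h0, _⟩, hle⟩; exact ⟨h0, hle⟩
        · rintro ⟨h0, hle⟩; exact ⟨⟨h0, lt_of_le_of_lt hle h1⟩, hle⟩
      rw [this, Real.volume_Ioc, sub_zero]
  rw [hvolA, chiCDF, ENNReal.ofReal_toReal (measure_ne_top _ _)]


lemma Gamma_lower (d : ℕ) (hd : 1 ≤ d) (k : ℕ) :
    Real.Gamma ((d:ℝ)/2) ≤ 2^k * Real.Gamma ((k:ℝ) + d/2) := by
  have hd1 : (1:ℝ) ≤ d := by exact_mod_cast hd
  induction k with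
  | zero => simp
  | succ n ih =>
    have hpos : 0 < (n:ℝ) + d/2 := by positivity
    have hG : Real.Gamma (((n+1:ℕ):ℝ) + d/2) = ((n:ℝ)+d/2) * Real.Gamma ((n:ℝ)+d/2) := by
      push_cast
      rw [show (n:ℝ) + 1 + d/2 = ((n:ℝ) + d/2) + 1 by ring, Real.Gamma_add_one hpos.ne']
    rw [hG]
    have hGpos : 0 < Real.Gamma ((n:ℝ)+d/2) := Real.Gamma_pos_of_pos hpos
    have h2 : (2:ℝ)^n * Real.Gamma ((n:ℝ)+d/2)
        ≤ 2^(n+1) * (((n:ℝ)+d/2) * Real.Gamma ((n:ℝ)+d/2)) := by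
      have hh : (2:ℝ)^(n+1) * (((n:ℝ)+d/2) * Real.Gamma ((n:ℝ)+d/2))
          = 2^n * ((2*((n:ℝ)+d/2)) * Real.Gamma ((n:ℝ)+d/2)) := by ring
      rw [hh]
      have h1 : Real.Gamma ((n:ℝ)+d/2) ≤ (2*((n:ℝ)+d/2)) * Real.Gamma ((n:ℝ)+d/2) := by
        nlinarith
      have := mul_le_mul_of_nonneg_left h1 (le_of_lt (pow_pos (by norm_num : (0:ℝ)<2) n))
      linarith
    linarith

lemma summable_series (d : ℕ) (hd : 1 ≤ d) (v : ℝ) {r : ℝ} (hr : 0 ≤ r) :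
    Summable (fun k : ℕ =>
      v ^ (2*k) * r ^ k / (4^k * (Nat.factorial k) * Real.Gamma ((k:ℝ) + d/2))) := by
  have hd1 : (1:ℝ) ≤ d := by exact_mod_cast hd
  have hhalf : 0 < (d:ℝ)/2 := by linarith
  have hΓhalf : 0 < Real.Gamma ((d:ℝ)/2) := Real.Gamma_pos_of_pos hhalf
  refine Summable.of_nonneg_of_le (fun k => ?_) (fun k => ?_)
    (((Real.summable_pow_div_factorial (v^2*r/2)).mul_left (1/Real.Gamma ((d:ℝ)/2))))
  · have hΓk : 0 < Real.Gamma ((k:ℝ) + d/2) := Real.Gamma_pos_of_pos (by positivity)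
    have hv2 : 0 ≤ v^(2*k) := by rw [pow_mul]; positivity
    exact div_nonneg (mul_nonneg hv2 (pow_nonneg hr k)) (by positivity)
  · have hΓk : 0 < Real.Gamma ((k:ℝ) + d/2) := Real.Gamma_pos_of_pos (by positivity)
    have hlow := Gamma_lower d hd k
    have hN : v^(2*k) * r^k = (v^2*r)^k := by rw [pow_mul, mul_pow]
    have hfac : (0:ℝ) < (Nat.factorial k : ℝ) := by exact_mod_cast k.factorial_pos
    have hstep : v ^ (2*k) * r ^ k / (4^k * (Nat.factorial k) * Real.Gamma ((k:ℝ) + d/2))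
        ≤ (v^2*r)^k / (2^k * (Nat.factorial k) * Real.Gamma ((d:ℝ)/2)) := by
      rw [hN]
      apply div_le_div_of_nonneg_left (by positivity) (by positivity)
      have h4 : (4:ℝ)^k = 2^k * 2^k := by rw [← mul_pow]; norm_num
      have := mul_le_mul_of_nonneg_left hlow (le_of_lt (pow_pos (by norm_num : (0:ℝ)<2) k))
      calc 2^k * (Nat.factorial k : ℝ) * Real.Gamma ((d:ℝ)/2)
          ≤ 2^k * (Nat.factorial k : ℝ) * (2^k * Real.Gamma ((k:ℝ) + d/2)) := by
            apply mul_le_mul_of_nonneg_left hlow (by positivity)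
        _ = 4^k * (Nat.factorial k : ℝ) * Real.Gamma ((k:ℝ) + d/2) := by rw [h4]; ring
    refine hstep.trans (le_of_eq ?_)
    rw [div_pow, mul_pow]
    field_simp
lemma meas_sq_fst (j : ℕ) :
    Measurable fun p : ℝ×ℝ => (ENNReal.ofReal (p.1^2))^j :=
  ((measurable_fst.pow_const 2).ennreal_ofReal).pow_const j

lemma meas_sq_snd (j : ℕ) :
    Measurable fun p : ℝ×ℝ => (ENNReal.ofReal (p.2^2))^j :=
  ((measurable_snd.pow_const 2).ennreal_ofReal).pow_const j

lemma marg_fst {d : ℕ} {μ : Measure (ℝ×ℝ)} (h1 : μ.map Prod.fst = chi d) (k : ℕ) :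
    ∫⁻ p, (ENNReal.ofReal (p.1^2))^k ∂μ = ∫⁻ x, (ENNReal.ofReal (x^2))^k ∂(chi d) := by
  have hm : Measurable fun x : ℝ => (ENNReal.ofReal (x ^ 2)) ^ k :=
    ((measurable_id.pow_const 2).ennreal_ofReal).pow_const k
  rw [← h1, lintegral_map hm measurable_fst]

lemma marg_snd {d : ℕ} {μ : Measure (ℝ×ℝ)} (h2 : μ.map Prod.snd = chi d) (k : ℕ) :
    ∫⁻ p, (ENNReal.ofReal (p.2^2))^k ∂μ = ∫⁻ x, (ENNReal.ofReal (x^2))^k ∂(chi d) := by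
  have hm : Measurable fun x : ℝ => (ENNReal.ofReal (x ^ 2)) ^ k :=
    ((measurable_id.pow_const 2).ennreal_ofReal).pow_const k
  rw [← h2, lintegral_map hm measurable_snd]

lemma holder_prod {d : ℕ} {μ : Measure (ℝ×ℝ)}
    (h1 : μ.map Prod.fst = chi d) (h2 : μ.map Prod.snd = chi d) (j m : ℕ) :
    ∫⁻ p, (ENNReal.ofReal (p.1^2))^j * (ENNReal.ofReal (p.2^2))^m ∂μ
      ≤ ∫⁻ x, (ENNReal.ofReal (x^2))^(j+m) ∂(chi d) := by
  rcases Nat.eq_zero_or_pos j with hj | hj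
  · subst hj
    simp only [pow_zero, one_mul, Nat.zero_add]
    exact le_of_eq (marg_snd h2 m)
  rcases Nat.eq_zero_or_pos m with hm | hm
  · subst hm
    simp only [pow_zero, mul_one, Nat.add_zero]
    exact le_of_eq (marg_fst h1 j)
  set k := j + m with hk
  have hjk : j < k := by omega
  have hmk : m < k := by omega
  have hkpos : 0 < k := by omega
  have hk0 : ((k:ℝ)) ≠ 0 := by positivity
  set M := ∫⁻ x, (ENNReal.ofReal (x^2))^k ∂(chi d) with hM
  have hpq : Real.HolderConjugate ((k:ℝ)/j) ((k:ℝ)/m) := by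
    rw [Real.holderConjugate_iff]; constructor
    · rw [one_lt_div (by exact_mod_cast hj)]
      exact_mod_cast hjk
    · rw [inv_div, inv_div, ← add_div]
      rw [show (j:ℝ) + m = (k:ℝ) by exact_mod_cast congrArg Nat.cast hk.symm]
      exact div_self hk0
  have hH := ENNReal.lintegral_mul_le_Lp_mul_Lq μ hpq
    (meas_sq_fst j).aemeasurable (meas_sq_snd m).aemeasurable
  simp only [Pi.mul_apply] at hH
  have hfp : ∀ p : ℝ×ℝ, ((ENNReal.ofReal (p.1^2))^j) ^ ((k:ℝ)/j)
      = (ENNReal.ofReal (p.1^2))^k := fun p => by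
    rw [← ENNReal.rpow_natCast _ j, ← ENNReal.rpow_mul,
      show (j:ℝ) * ((k:ℝ)/j) = (k:ℝ) by field_simp, ENNReal.rpow_natCast]
  have hgp : ∀ p : ℝ×ℝ, ((ENNReal.ofReal (p.2^2))^m) ^ ((k:ℝ)/m)
      = (ENNReal.ofReal (p.2^2))^k := fun p => by
    rw [← ENNReal.rpow_natCast _ m, ← ENNReal.rpow_mul,
      show (m:ℝ) * ((k:ℝ)/m) = (k:ℝ) by field_simp, ENNReal.rpow_natCast]
  simp only [hfp, hgp, one_div_div] at hH
  rw [marg_fst h1 k, marg_snd h2 k, ← hM] at hH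
  refine hH.trans ?_
  rcases eq_or_ne M ⊤ with hMt | hMt
  · rw [hMt]; exact le_top
  rcases eq_or_ne M 0 with hM0 | hM0
  · rw [hM0, ENNReal.zero_rpow_of_pos (by positivity), zero_mul]
  rw [← ENNReal.rpow_add _ _ hM0 hMt,
    show (j:ℝ)/k + (m:ℝ)/k = 1 by
      rw [← add_div, show (j:ℝ) + m = (k:ℝ) by exact_mod_cast congrArg Nat.cast hk.symm]
      exact div_self hk0,
    ENNReal.rpow_one]

lemma key_ineq {d : ℕ} {μ : Measure (ℝ×ℝ)}
    (h1 : μ.map Prod.fst = chi d) (h2 : μ.map Prod.snd = chi d) (k : ℕ) :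
    ∫⁻ p, ENNReal.ofReal ((p.1^2+p.2^2)^k) ∂μ
      ≤ 2^k * ∫⁻ x, (ENNReal.ofReal (x^2))^k ∂(chi d) := by
  have hrw : ∀ p : ℝ×ℝ, ENNReal.ofReal ((p.1^2+p.2^2)^k)
      = ∑ j ∈ Finset.range (k+1),
        (ENNReal.ofReal (p.1^2))^j * (ENNReal.ofReal (p.2^2))^(k-j) * (k.choose j : ℝ≥0∞) :=
    fun p => by
      rw [ENNReal.ofReal_pow (by positivity),
        ENNReal.ofReal_add (sq_nonneg _) (sq_nonneg _), add_pow]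
  simp only [hrw]
  rw [lintegral_finset_sum _ (f := fun j (p : ℝ×ℝ) => (ENNReal.ofReal (p.1^2))^j * (ENNReal.ofReal (p.2^2))^(k-j) * (k.choose j : ℝ≥0∞)) (fun j _ => by fun_prop)]
  set M := ∫⁻ x, (ENNReal.ofReal (x^2))^k ∂(chi d) with hM
  calc ∑ j ∈ Finset.range (k+1),
        ∫⁻ p, (ENNReal.ofReal (p.1^2))^j * (ENNReal.ofReal (p.2^2))^(k-j)
          * (k.choose j : ℝ≥0∞) ∂μ
      ≤ ∑ j ∈ Finset.range (k+1), M * (k.choose j : ℝ≥0∞) := by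
        refine Finset.sum_le_sum fun j hj => ?_
        rw [lintegral_mul_const _ (f := fun p : ℝ×ℝ => (ENNReal.ofReal (p.1^2))^j * (ENNReal.ofReal (p.2^2))^(k-j)) (by fun_prop)]
        refine mul_le_mul_left ?_ _
        have hjk : j ≤ k := Nat.lt_succ_iff.mp (Finset.mem_range.mp hj)
        have := holder_prod h1 h2 j (k-j)
        rwa [Nat.add_sub_cancel' hjk] at this
    _ = 2^k * M := by
        rw [← Finset.mul_sum]
        rw [show ∑ j ∈ Finset.range (k+1), (k.choose j : ℝ≥0∞) = 2^k by
          rw [← Nat.cast_sum, Nat.sum_range_choose]; push_cast; ring]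
        rw [mul_comm]

lemma muPM_value (d : ℕ) (k : ℕ) :
    ∫⁻ p, ENNReal.ofReal ((p.1^2+p.2^2)^k) ∂(muPM d)
      = 2^k * ∫⁻ x, (ENNReal.ofReal (x^2))^k ∂(chi d) := by
  have hQ := quantile_aemeasurable d
  have hmeas : Measurable fun p : ℝ×ℝ => ENNReal.ofReal ((p.1^2+p.2^2)^k) :=
    (((measurable_fst.pow_const 2).add (measurable_snd.pow_const 2)).pow_const k).ennreal_ofReal
  rw [muPM, lintegral_map' hmeas.aemeasurable (hQ.prodMk hQ)]
  have hpt : ∀ u : ℝ, ENNReal.ofReal (((chiQuantile d u)^2+(chiQuantile d u)^2)^k)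
      = 2^k * (ENNReal.ofReal ((chiQuantile d u)^2))^k := fun u => by
    set q := chiQuantile d u
    rw [show q^2 + q^2 = 2*q^2 by ring, mul_pow,
      ENNReal.ofReal_mul (by positivity : (0:ℝ) ≤ 2^k),
      ENNReal.ofReal_pow (sq_nonneg q),
      ENNReal.ofReal_pow (by norm_num : (0:ℝ) ≤ 2)]
    norm_num
  simp only [hpt]
  rw [lintegral_const_mul' _ _ (ENNReal.pow_ne_top ENNReal.ofNat_ne_top)]
  congr 1
  have hm : Measurable fun x : ℝ => (ENNReal.ofReal (x ^ 2)) ^ k :=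
    ((measurable_id.pow_const 2).ennreal_ofReal).pow_const k
  rw [← map_quantile d, lintegral_map' hm.aemeasurable hQ]

lemma ofReal_cRLF (d : ℕ) (hd : 1 ≤ d) (v : ℝ) (x y : ℝ) :
    ENNReal.ofReal (cRLF d v x y)
      = ∑' k : ℕ, ENNReal.ofReal (v ^ (2 * k) * (x ^ 2 + y ^ 2) ^ k /
          (4 ^ k * (Nat.factorial k) * Real.Gamma ((k : ℝ) + d / 2))) := by
  rw [cRLF]
  refine ENNReal.ofReal_tsum_of_nonneg (fun k => ?_) (summable_series d hd v (by positivity))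
  have hΓk : 0 < Real.Gamma ((k:ℝ) + d/2) := Real.Gamma_pos_of_pos (by positivity)
  have hv2 : 0 ≤ v^(2*k) := by rw [pow_mul]; positivity
  exact div_nonneg (mul_nonneg hv2 (by positivity)) (by positivity)

/-- Among all couplings of `χ_d` with itself, the positive monotone coupling maximizes the
expected cost `c_RLF`. -/
theorem positiveMonotone_maximizes_cRLF (d : ℕ) (hd : 1 ≤ d) (v : ℝ) (hv : 0 ≤ v)
    (μ : Measure (ℝ × ℝ)) [IsProbabilityMeasure μ]
    (h1 : μ.map Prod.fst = chi d) (h2 : μ.map Prod.snd = chi d) :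
    ∫⁻ p, ENNReal.ofReal (cRLF d v p.1 p.2) ∂μ ≤
      ∫⁻ p, ENNReal.ofReal (cRLF d v p.1 p.2) ∂(muPM d) := by
  have hdR : (1:ℝ) ≤ d := by exact_mod_cast hd
  have hgmeas : ∀ k : ℕ, Measurable fun p : ℝ×ℝ =>
      ENNReal.ofReal (v ^ (2 * k) * (p.1 ^ 2 + p.2 ^ 2) ^ k /
        (4 ^ k * (Nat.factorial k) * Real.Gamma ((k : ℝ) + d / 2))) := fun k =>
    ((((((measurable_fst.pow_const 2).add (measurable_snd.pow_const 2)).pow_const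
      k).const_mul _).div_const _).ennreal_ofReal)
  simp only [ofReal_cRLF d hd v]
  rw [lintegral_tsum (fun k => (hgmeas k).aemeasurable),
    lintegral_tsum (fun k => (hgmeas k).aemeasurable)]
  refine ENNReal.tsum_le_tsum fun k => ?_
  have hre : ∀ p : ℝ × ℝ,
      ENNReal.ofReal (v ^ (2 * k) * (p.1 ^ 2 + p.2 ^ 2) ^ k /
        (4 ^ k * (Nat.factorial k) * Real.Gamma ((k : ℝ) + d / 2)))
      = ENNReal.ofReal ((p.1 ^ 2 + p.2 ^ 2) ^ k) *
        ENNReal.ofReal (v ^ (2 * k) / (4 ^ k * (Nat.factorial k)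
          * Real.Gamma ((k : ℝ) + d / 2))) := fun p => by
    rw [show v ^ (2 * k) * (p.1 ^ 2 + p.2 ^ 2) ^ k /
        (4 ^ k * (Nat.factorial k) * Real.Gamma ((k : ℝ) + d / 2))
      = (p.1 ^ 2 + p.2 ^ 2) ^ k * (v ^ (2 * k) /
        (4 ^ k * (Nat.factorial k) * Real.Gamma ((k : ℝ) + d / 2))) by ring]
    exact ENNReal.ofReal_mul (by positivity)
  simp only [hre]
  rw [lintegral_mul_const' _ _ ENNReal.ofReal_ne_top,
    lintegral_mul_const' _ _ ENNReal.ofReal_ne_top]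
  exact mul_le_mul_left ((key_ineq h1 h2 k).trans (le_of_eq (muPM_value d k).symm)) _

end
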